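/- Let G be a snake graph and let G_i and G_{i+1} be two consecutive tiles of G sharing the side a. If b ≠ a is a side of G_i having a common vertex with a, and c ≠ a is a side of G_{i+1} having a common vertex with a, then no perfect matching of G contains both b and c. -/

import Mathlib

/-- An edge of the integer lattice: `(p, true)` is the horizontal unit segment
from `p` to `p + (1, 0)`, and `(p, false)` is the vertical unit segment from
`p` to `p + (0, 1)`. -/
abbrev LatticeEdge : Type := (ℤ × ℤ) × Bool

/-- A lattice edge is horizontal if it is parallel to the x-axis. -/
def IsHorizontalEdge (e : LatticeEdge) : Prop := e.2 = true

/-- A lattice edge is vertical if it is parallel to the y-axis. -/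
def IsVerticalEdge (e : LatticeEdge) : Prop := e.2 = false

/-- The two endpoints of a lattice edge. -/
def endpointsOf (e : LatticeEdge) : Set (ℤ × ℤ) :=
  if e.2 then {e.1, (e.1.1 + 1, e.1.2)} else {e.1, (e.1.1, e.1.2 + 1)}

/-- The south side of the unit tile with lower-left corner `c`. -/
def southSide (c : ℤ × ℤ) : LatticeEdge := (c, true)

/-- The north side of the unit tile with lower-left corner `c`. -/
def northSide (c : ℤ × ℤ) : LatticeEdge := ((c.1, c.2 + 1), true)

/-- The west side of the unit tile with lower-left corner `c`. -/
def westSide (c : ℤ × ℤ) : LatticeEdge := (c, false)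

/-- The east side of the unit tile with lower-left corner `c`. -/
def eastSide (c : ℤ × ℤ) : LatticeEdge := ((c.1 + 1, c.2), false)

/-- The four sides of the unit tile with lower-left corner `c`. -/
def tileSides (c : ℤ × ℤ) : Set LatticeEdge :=
  {southSide c, northSide c, westSide c, eastSide c}

/-- The four corners of the unit tile with lower-left corner `c`. -/
def tileCorners (c : ℤ × ℤ) : Set (ℤ × ℤ) :=
  {c, (c.1 + 1, c.2), (c.1, c.2 + 1), (c.1 + 1, c.2 + 1)}

/-- A snake graph with `d ≥ 1` tiles: tile `1` has lower-left corner `(0, 0)`,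
and each subsequent tile is the translate of the previous one by one unit to
the right or one unit up.  Tiles are indexed `1, …, d`; `corner i` is the
lower-left corner of tile `i`. -/
structure SnakeGraph where
  d : ℕ
  one_le_d : 1 ≤ d
  corner : ℕ → ℤ × ℤ
  corner_one : corner 1 = (0, 0)
  corner_succ : ∀ i, 1 ≤ i → i < d →
    corner (i + 1) = ((corner i).1 + 1, (corner i).2) ∨
      corner (i + 1) = ((corner i).1, (corner i).2 + 1)

namespace SnakeGraph

/-- The set of sides of tile `i` of `G`. -/
def tile (G : SnakeGraph) (i : ℕ) : Set LatticeEdge := tileSides (G.corner i)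

/-- The edge set of (the graph of) `G`: all sides of all tiles. -/
def edges (G : SnakeGraph) : Set LatticeEdge := ⋃ i ∈ Set.Icc 1 G.d, G.tile i

/-- The vertex set of `G`: all corners of all tiles. -/
def vertices (G : SnakeGraph) : Set (ℤ × ℤ) :=
  ⋃ i ∈ Set.Icc 1 G.d, tileCorners (G.corner i)

/-- A perfect matching of `G`: a set of edges of `G` such that every vertex of
`G` is incident to exactly one edge of the set. -/
def IsPerfectMatching (G : SnakeGraph) (P : Set LatticeEdge) : Prop :=
  P ⊆ G.edges ∧ ∀ v ∈ G.vertices, ∃! e, e ∈ P ∧ v ∈ endpointsOf e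

/-- `P` can twist on tile `i` if two of the four sides of tile `i` belong to `P`. -/
def CanTwist (G : SnakeGraph) (P : Set LatticeEdge) (i : ℕ) : Prop :=
  1 ≤ i ∧ i ≤ G.d ∧ (P ∩ G.tile i).ncard = 2

/-- The twist of `P` on tile `i`: replace the sides of tile `i` belonging to
`P` by the other sides of tile `i`. -/
def twist (G : SnakeGraph) (i : ℕ) (P : Set LatticeEdge) : Set LatticeEdge :=
  (P \ G.tile i) ∪ (G.tile i \ P)

/-- A boundary edge of `G`: an edge which is a side of exactly one tile. -/
def IsBoundaryEdge (G : SnakeGraph) (e : LatticeEdge) : Prop :=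
  ∃! i, (1 ≤ i ∧ i ≤ G.d) ∧ e ∈ G.tile i

/-- `P` is the minimal matching `P₋` of `G`: the perfect matching consisting
only of boundary edges which contains no vertical side of tile `1`. -/
def IsMinimalMatching (G : SnakeGraph) (P : Set LatticeEdge) : Prop :=
  G.IsPerfectMatching P ∧ (∀ e ∈ P, G.IsBoundaryEdge e) ∧
    ∀ e ∈ P ∩ G.tile 1, IsHorizontalEdge e

/-- `P` is the maximal matching `P₊` of `G`: the perfect matching consisting
only of boundary edges other than the minimal one, i.e. the one containing a
vertical side of tile `1`. -/
def IsMaximalMatching (G : SnakeGraph) (P : Set LatticeEdge) : Prop :=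
  G.IsPerfectMatching P ∧ (∀ e ∈ P, G.IsBoundaryEdge e) ∧
    ∃ e ∈ P ∩ G.tile 1, IsVerticalEdge e

/-- `G` is a straight snake graph: every tile is the translate of the previous
one by one unit to the right. -/
def IsStraight (G : SnakeGraph) : Prop :=
  ∀ i, 1 ≤ i → i < G.d → G.corner (i + 1) = ((G.corner i).1 + 1, (G.corner i).2)

end SnakeGraph

section Aux

open Set

/-- The set of corners of tiles `1, …, i`. -/
def SS (G : SnakeGraph) (i : ℕ) : Set (ℤ × ℤ) :=
  ⋃ j ∈ Set.Icc 1 i, tileCorners (G.corner j)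

lemma tileCorners_finite (c : ℤ × ℤ) : (tileCorners c).Finite := by
  unfold tileCorners
  exact (Set.finite_singleton _).insert _ |>.insert _ |>.insert _

lemma SS_finite (G : SnakeGraph) (i : ℕ) : (SS G i).Finite := by
  apply Set.Finite.biUnion (Set.finite_Icc _ _)
  intro j _
  exact tileCorners_finite _

lemma mem_tileCorners {v c : ℤ × ℤ} (h : v ∈ tileCorners c) :
    (v.1 = c.1 ∨ v.1 = c.1 + 1) ∧ (v.2 = c.2 ∨ v.2 = c.2 + 1) := by
  simp only [tileCorners, Set.mem_insert_iff, Set.mem_singleton_iff] at h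
  rcases h with rfl | rfl | rfl | rfl <;> simp

lemma corner_mono (G : SnakeGraph) :
    ∀ k, k ≤ G.d → ∀ j, 1 ≤ j → j ≤ k →
      (G.corner j).1 ≤ (G.corner k).1 ∧ (G.corner j).2 ≤ (G.corner k).2 := by
  intro k
  induction k with
  | zero => intro _ j hj1 hj0; omega
  | succ n ih =>
    intro hk j hj1 hjk
    rcases Nat.eq_or_lt_of_le hjk with h | h
    · subst h; exact ⟨le_refl _, le_refl _⟩
    · have hjn : j ≤ n := by omega
      have h1n : 1 ≤ n := by omega
      have hmono := ih (by omega) j hj1 hjn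
      rcases G.corner_succ n h1n (by omega) with h' | h' <;> rw [h'] <;>
        constructor <;> simp <;> omega

lemma endpoints_subset_tileCorners {e : LatticeEdge} {c : ℤ × ℤ}
    (h : e ∈ tileSides c) : endpointsOf e ⊆ tileCorners c := by
  simp only [tileSides, Set.mem_insert_iff, Set.mem_singleton_iff] at h
  rcases h with rfl | rfl | rfl | rfl <;>
    simp [endpointsOf, southSide, northSide, westSide, eastSide, tileCorners] <;>
    intro v hv <;> simp_all <;> tauto

lemma mem_SS_bound (G : SnakeGraph) (i : ℕ) (hid : i ≤ G.d) {v : ℤ × ℤ}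
    (hv : v ∈ SS G i) :
    v.1 ≤ (G.corner i).1 + 1 ∧ v.2 ≤ (G.corner i).2 + 1 := by
  simp only [SS, Set.mem_iUnion, Set.mem_Icc] at hv
  obtain ⟨j, ⟨hj1, hji⟩, hvj⟩ := hv
  have hm := corner_mono G i hid j hj1 hji
  have hb := mem_tileCorners hvj
  omega

lemma tileCorners_subset_SS (G : SnakeGraph) (i : ℕ) (hi1 : 1 ≤ i) :
    tileCorners (G.corner i) ⊆ SS G i := by
  intro v hv
  exact Set.mem_biUnion (Set.mem_Icc.mpr ⟨hi1, le_refl _⟩) hv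

lemma SS_subset_vertices (G : SnakeGraph) (i : ℕ) (hid : i ≤ G.d) :
    SS G i ⊆ G.vertices := by
  intro v hv
  simp only [SS, Set.mem_iUnion, Set.mem_Icc] at hv
  obtain ⟨j, ⟨hj1, hji⟩, hvj⟩ := hv
  exact Set.mem_biUnion (Set.mem_Icc.mpr ⟨hj1, le_trans hji hid⟩) hvj

lemma SS_ncard (G : SnakeGraph) : ∀ i, 1 ≤ i → i ≤ G.d → (SS G i).ncard = 2 * i + 2 := by
  intro i
  induction i with
  | zero => omega
  | succ k ih =>
    intro _ hkd
    rcases Nat.eq_zero_or_pos k with hk0 | hk1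
    · subst hk0
      have : SS G 1 = tileCorners (G.corner 1) := by
        apply Set.Subset.antisymm
        · intro v hv
          simp only [SS, Set.mem_iUnion, Set.mem_Icc] at hv
          obtain ⟨j, ⟨hj1, hji⟩, hvj⟩ := hv
          have : j = 1 := by omega
          subst this; exact hvj
        · exact tileCorners_subset_SS G 1 le_rfl
      rw [this, G.corner_one]
      rw [show tileCorners ((0 : ℤ), (0 : ℤ)) =
        {((0:ℤ),(0:ℤ)), ((1:ℤ),(0:ℤ)), ((0:ℤ),(1:ℤ)), ((1:ℤ),(1:ℤ))} by
          simp [tileCorners]]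
      rw [Set.ncard_insert_of_notMem (by simp [Prod.ext_iff]),
        Set.ncard_insert_of_notMem (by simp [Prod.ext_iff]),
        Set.ncard_pair (by simp [Prod.ext_iff])]
    · have hSS : SS G (k + 1) = SS G k ∪ tileCorners (G.corner (k + 1)) := by
        unfold SS
        rw [show Set.Icc 1 (k + 1) = insert (k + 1) (Set.Icc 1 k) by
          ext m; simp [Set.mem_Icc]; omega]
        rw [Set.biUnion_insert]
        exact Set.union_comm _ _
      have hck := ih hk1 (by omega)
      have hbound : ∀ v ∈ SS G k, v.1 ≤ (G.corner k).1 + 1 ∧ v.2 ≤ (G.corner k).2 + 1 :=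
        fun v hv => mem_SS_bound G k (by omega) hv
      have hkmem : tileCorners (G.corner k) ⊆ SS G k := tileCorners_subset_SS G k hk1
      rcases G.corner_succ k hk1 (by omega) with h' | h'
      · have heq : SS G (k + 1) = insert ((G.corner k).1 + 1 + 1, (G.corner k).2)
            (insert ((G.corner k).1 + 1 + 1, (G.corner k).2 + 1) (SS G k)) := by
          rw [hSS, h']
          apply Set.Subset.antisymm
          · apply Set.union_subset
            · intro v hv; right; right; exact hv
            · intro v hv
              simp only [tileCorners, Set.mem_insert_iff, Set.mem_singleton_iff] at hv
              rcases hv with rfl | rfl | rfl | rfl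
              · right; right; apply hkmem; simp [tileCorners]
              · left; rfl
              · right; right; apply hkmem; simp [tileCorners]
              · right; left; rfl
          · intro v hv
            rcases hv with rfl | rfl | hv
            · right; simp [tileCorners]
            · right; simp [tileCorners]
            · left; exact hv
        have hn1 : ((G.corner k).1 + 1 + 1, (G.corner k).2 + 1) ∉ SS G k := by
          intro hmem; have := hbound _ hmem; simp at this <;> omega
        have hn2 : ((G.corner k).1 + 1 + 1, (G.corner k).2) ∉
            insert ((G.corner k).1 + 1 + 1, (G.corner k).2 + 1) (SS G k) := by
          intro hmem
          rcases hmem with h | hmem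
          · simp [Prod.ext_iff] at h
          · have := hbound _ hmem; simp at this <;> omega
        rw [heq, Set.ncard_insert_of_notMem hn2 ((SS_finite G k).insert _),
          Set.ncard_insert_of_notMem hn1 (SS_finite G k)]
        omega
      · have heq : SS G (k + 1) = insert ((G.corner k).1, (G.corner k).2 + 1 + 1)
            (insert ((G.corner k).1 + 1, (G.corner k).2 + 1 + 1) (SS G k)) := by
          rw [hSS, h']
          apply Set.Subset.antisymm
          · apply Set.union_subset
            · intro v hv; right; right; exact hv
            · intro v hv
              simp only [tileCorners, Set.mem_insert_iff, Set.mem_singleton_iff] at hv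
              rcases hv with rfl | rfl | rfl | rfl
              · right; right; apply hkmem; simp [tileCorners]
              · right; right; apply hkmem; simp [tileCorners]
              · left; rfl
              · right; left; rfl
          · intro v hv
            rcases hv with rfl | rfl | hv
            · right; simp [tileCorners]
            · right; simp [tileCorners]
            · left; exact hv
        have hn1 : ((G.corner k).1 + 1, (G.corner k).2 + 1 + 1) ∉ SS G k := by
          intro hmem; have := hbound _ hmem; simp at this <;> omega
        have hn2 : ((G.corner k).1, (G.corner k).2 + 1 + 1) ∉
            insert ((G.corner k).1 + 1, (G.corner k).2 + 1 + 1) (SS G k) := by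
          intro hmem
          rcases hmem with h | hmem
          · simp [Prod.ext_iff] at h
          · have := hbound _ hmem; simp at this <;> omega
        rw [heq, Set.ncard_insert_of_notMem hn2 ((SS_finite G k).insert _),
          Set.ncard_insert_of_notMem hn1 (SS_finite G k)]
        omega

end Aux

section Aux2

lemma endpointsOf_finite (e : LatticeEdge) : (endpointsOf e).Finite := by
  unfold endpointsOf; split <;> exact (Set.finite_singleton _).insert _

lemma endpointsOf_ncard (e : LatticeEdge) : (endpointsOf e).ncard = 2 := by
  unfold endpointsOf
  split <;> exact Set.ncard_pair (by simp [Prod.ext_iff])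

lemma even_ncard_matched (P : Set LatticeEdge) :
    ∀ n (X : Set (ℤ × ℤ)), X.Finite → X.ncard = n →
    (∀ e ∈ P, ∀ e' ∈ P, ∀ v ∈ X, v ∈ endpointsOf e → v ∈ endpointsOf e' → e = e') →
    (∀ v ∈ X, ∃ e ∈ P, v ∈ endpointsOf e ∧ endpointsOf e ⊆ X) →
    Even n := by
  intro n
  induction n using Nat.strong_induction_on with
  | _ n ih =>
    intro X hfin hcard huniq hmatch
    rcases Nat.eq_zero_or_pos n with h0 | hpos
    · subst h0; exact Even.zero
    · obtain ⟨v, hv⟩ := Set.nonempty_of_ncard_ne_zero (by omega : X.ncard ≠ 0)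
      obtain ⟨e, heP, hve, hsub⟩ := hmatch v hv
      have h2 : (endpointsOf e).ncard = 2 := endpointsOf_ncard e
      have hn2 : 2 ≤ n := by
        rw [← hcard, ← h2]; exact Set.ncard_le_ncard hsub hfin
      set X' := X \ endpointsOf e with hX'
      have hfin' : X'.Finite := hfin.diff
      have hcard' : X'.ncard = n - 2 := by
        rw [hX', Set.ncard_diff hsub (endpointsOf_finite e), hcard, h2]
      have hmatch' : ∀ w ∈ X', ∃ f ∈ P, w ∈ endpointsOf f ∧ endpointsOf f ⊆ X' := by
        intro w hw
        obtain ⟨f, hfP, hwf, hfsub⟩ := hmatch w hw.1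
        refine ⟨f, hfP, hwf, ?_⟩
        intro u hu
        refine ⟨hfsub hu, ?_⟩
        intro hue
        have : f = e := huniq f hfP e heP u (hfsub hu) hu hue
        subst this
        exact hw.2 hwf
      have huniq' : ∀ e₁ ∈ P, ∀ e₂ ∈ P, ∀ w ∈ X',
          w ∈ endpointsOf e₁ → w ∈ endpointsOf e₂ → e₁ = e₂ :=
        fun e₁ h₁ e₂ h₂ w hw => huniq e₁ h₁ e₂ h₂ w hw.1
      have hev := ih (n - 2) (by omega) X' hfin' hcard' huniq' hmatch'
      obtain ⟨k, hk⟩ := hev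
      exact ⟨k + 1, by omega⟩

lemma edge_mem_tile_of_mem_edges {G : SnakeGraph} {e : LatticeEdge}
    (h : e ∈ G.edges) : ∃ j, 1 ≤ j ∧ j ≤ G.d ∧ e ∈ G.tile j := by
  simp only [SnakeGraph.edges, Set.mem_iUnion, Set.mem_Icc] at h
  obtain ⟨j, ⟨h1, h2⟩, h3⟩ := h
  exact ⟨j, h1, h2, h3⟩

lemma matching_uniq {G : SnakeGraph} {P : Set LatticeEdge}
    (hP : G.IsPerfectMatching P) {v : ℤ × ℤ} (hv : v ∈ G.vertices)
    {e e' : LatticeEdge} (he : e ∈ P) (he' : e' ∈ P)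
    (hve : v ∈ endpointsOf e) (hve' : v ∈ endpointsOf e') : e = e' := by
  obtain ⟨w, _, hw⟩ := hP.2 v hv
  rw [hw e ⟨he, hve⟩, hw e' ⟨he', hve'⟩]

lemma parity_contradiction (G : SnakeGraph) (i : ℕ) (hi1 : 1 ≤ i) (hid : i ≤ G.d)
    (P : Set LatticeEdge) (hP : G.IsPerfectMatching P)
    (b c : LatticeEdge) (hbP : b ∈ P) (hcP : c ∈ P)
    (hcross : ∀ j, i + 1 ≤ j → j ≤ G.d → ∀ v ∈ SS G i,
      v ∈ tileCorners (G.corner j) → v ∈ endpointsOf b ∪ endpointsOf c)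
    (hT : (SS G i ∩ (endpointsOf b ∪ endpointsOf c)).ncard = 3) : False := by
  set U := endpointsOf b ∪ endpointsOf c with hU
  set X := SS G i \ U with hXdef
  have hXfin : X.Finite := (SS_finite G i).diff
  have hXcard : X.ncard = 2 * i - 1 := by
    have : X = SS G i \ (SS G i ∩ U) := Set.diff_self_inter.symm
    rw [this, Set.ncard_diff Set.inter_subset_left
        ((SS_finite G i).inter_of_left _), hT, SS_ncard G i hi1 hid]
    omega
  have hmatch : ∀ v ∈ X, ∃ e ∈ P, v ∈ endpointsOf e ∧ endpointsOf e ⊆ X := by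
    intro v hv
    have hvvert : v ∈ G.vertices := SS_subset_vertices G i hid hv.1
    obtain ⟨e, ⟨heP, hve⟩, _⟩ := hP.2 v hvvert
    refine ⟨e, heP, hve, ?_⟩
    obtain ⟨j, hj1, hjd, hej⟩ := edge_mem_tile_of_mem_edges (hP.1 heP)
    have hecorners : endpointsOf e ⊆ tileCorners (G.corner j) :=
      endpoints_subset_tileCorners hej
    by_cases hji : j ≤ i
    · have hsubS : endpointsOf e ⊆ SS G i := by
        intro u hu
        exact Set.mem_biUnion (Set.mem_Icc.mpr ⟨hj1, hji⟩) (hecorners hu)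
      intro u hu
      refine ⟨hsubS hu, ?_⟩
      intro huU
      have huvert : u ∈ G.vertices := SS_subset_vertices G i hid (hsubS hu)
      have : v ∈ U := by
        rcases huU with hub | huc
        · have : e = b := matching_uniq hP huvert heP hbP hu hub
          subst this; exact Or.inl hve
        · have : e = c := matching_uniq hP huvert heP hcP hu huc
          subst this; exact Or.inr hve
      exact hv.2 this
    · exfalso
      have := hcross j (by omega) hjd v hv.1 (hecorners hve)
      exact hv.2 this
  have huniq : ∀ e ∈ P, ∀ e' ∈ P, ∀ v ∈ X,
      v ∈ endpointsOf e → v ∈ endpointsOf e' → e = e' := by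
    intro e he e' he' v hv h1 h2
    exact matching_uniq hP (SS_subset_vertices G i hid hv.1) he he' h1 h2
  obtain ⟨k, hk⟩ := even_ncard_matched P (2 * i - 1) X hXfin hXcard huniq hmatch
  omega

lemma cross_R (G : SnakeGraph) (i : ℕ) (hi1 : 1 ≤ i) (hi2 : i + 1 ≤ G.d)
    (hR : G.corner (i + 1) = ((G.corner i).1 + 1, (G.corner i).2)) :
    ∀ j, i + 1 ≤ j → j ≤ G.d → ∀ v ∈ SS G i, v ∈ tileCorners (G.corner j) →
      v = ((G.corner i).1 + 1, (G.corner i).2) ∨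
        v = ((G.corner i).1 + 1, (G.corner i).2 + 1) := by
  intro j hj1 hjd v hvS hvj
  have hb1 := mem_SS_bound G i (by omega) hvS
  have hm := corner_mono G j hjd (i + 1) (by omega) hj1
  rw [hR] at hm
  have hb2 := mem_tileCorners hvj
  have hx : v.1 = (G.corner i).1 + 1 := by omega
  have hy : v.2 = (G.corner i).2 ∨ v.2 = (G.corner i).2 + 1 := by omega
  rcases hy with hy | hy
  · left; exact Prod.ext hx hy
  · right; exact Prod.ext hx hy

lemma cross_U (G : SnakeGraph) (i : ℕ) (hi1 : 1 ≤ i) (hi2 : i + 1 ≤ G.d)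
    (hUp : G.corner (i + 1) = ((G.corner i).1, (G.corner i).2 + 1)) :
    ∀ j, i + 1 ≤ j → j ≤ G.d → ∀ v ∈ SS G i, v ∈ tileCorners (G.corner j) →
      v = ((G.corner i).1, (G.corner i).2 + 1) ∨
        v = ((G.corner i).1 + 1, (G.corner i).2 + 1) := by
  intro j hj1 hjd v hvS hvj
  have hb1 := mem_SS_bound G i (by omega) hvS
  have hm := corner_mono G j hjd (i + 1) (by omega) hj1
  rw [hUp] at hm
  have hb2 := mem_tileCorners hvj
  have hy : v.2 = (G.corner i).2 + 1 := by omega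
  have hx : v.1 = (G.corner i).1 ∨ v.1 = (G.corner i).1 + 1 := by omega
  rcases hx with hx | hx
  · left; exact Prod.ext hx hy
  · right; exact Prod.ext hx hy

lemma ncard_triple (p q r : ℤ × ℤ) (hpq : p ≠ q) (hpr : p ≠ r) (hqr : q ≠ r) :
    ({p, q, r} : Set (ℤ × ℤ)).ncard = 3 := by
  rw [Set.ncard_insert_of_notMem (by simp [hpq, hpr])
      ((Set.finite_singleton _).insert _), Set.ncard_pair hqr]

end Aux2

lemma endpointsOf_true (p : ℤ × ℤ) : endpointsOf (p, true) = {p, (p.1 + 1, p.2)} := rfl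

lemma endpointsOf_false (p : ℤ × ℤ) : endpointsOf (p, false) = {p, (p.1, p.2 + 1)} := rfl


/-- If `G_i` and `G_{i+1}` are consecutive tiles of a snake graph `G` sharing
the side `a`, `b ≠ a` is a side of `G_i` having a common vertex with `a`, and
`c ≠ a` is a side of `G_{i+1}` having a common vertex with `a`, then no
perfect matching of `G` contains both `b` and `c`. -/
theorem no_matching_contains_both_neighbours
    (G : SnakeGraph) (i : ℕ) (hi1 : 1 ≤ i) (hi2 : i + 1 ≤ G.d)
    (a b c : LatticeEdge)
    (ha : a ∈ G.tile i ∩ G.tile (i + 1))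
    (hb : b ∈ G.tile i) (hba : b ≠ a)
    (hbv : (endpointsOf a ∩ endpointsOf b).Nonempty)
    (hc : c ∈ G.tile (i + 1)) (hca : c ≠ a)
    (hcv : (endpointsOf a ∩ endpointsOf c).Nonempty)
    (P : Set LatticeEdge) (hP : G.IsPerfectMatching P) :
    ¬(b ∈ P ∧ c ∈ P) := by
  
  rintro ⟨hbP, hcP⟩
  have hilt : i < G.d := by omega
  have hid : i ≤ G.d := by omega
  obtain ⟨x, y, hxy⟩ : ∃ x y, G.corner i = (x, y) := ⟨_, _, rfl⟩
  obtain ⟨ha1, ha2⟩ := ha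
  simp only [SnakeGraph.tile, tileSides, southSide, northSide, westSide, eastSide,
    Set.mem_insert_iff, Set.mem_singleton_iff, hxy] at ha1 hb
  -- vertices of tile i are in the vertex set
  have hvert : ∀ v ∈ tileCorners (G.corner i), v ∈ G.vertices := by
    intro v hv
    exact Set.mem_biUnion (Set.mem_Icc.mpr ⟨hi1, hid⟩) hv
  have hcornmem : ∀ v : ℤ × ℤ, (v = (x, y) ∨ v = (x + 1, y) ∨ v = (x, y + 1) ∨
      v = (x + 1, y + 1)) → v ∈ G.vertices := by
    intro v hv
    apply hvert
    rw [hxy]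
    simp only [tileCorners, Set.mem_insert_iff, Set.mem_singleton_iff]
    simpa using hv
  rcases G.corner_succ i hi1 hilt with hR | hUp
  · -- tile i+1 is to the right
    rw [hxy] at hR
    simp only [SnakeGraph.tile, tileSides, southSide, northSide, westSide, eastSide,
      Set.mem_insert_iff, Set.mem_singleton_iff, hR] at ha2 hc
    -- the shared side a is the east side of tile i
    have haval : a = ((x + 1, y), false) := by
      rcases ha1 with rfl | rfl | rfl | rfl <;> rcases ha2 with h | h | h | h <;>
        first
          | rfl
          | (exfalso; simp [Prod.ext_iff] at h <;> omega)
    subst haval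
    -- b is the north or south side of tile i
    have hbval : b = ((x, y), true) ∨ b = ((x, y + 1), true) := by
      rcases hb with rfl | rfl | rfl | rfl
      · left; rfl
      · right; rfl
      · exfalso
        obtain ⟨v, hva, hvb⟩ := hbv
        simp [endpointsOf_true, endpointsOf_false, Prod.ext_iff] at hva hvb
        omega
      · exact absurd rfl hba
    -- c is the north or south side of tile i+1
    have hcval : c = ((x + 1, y), true) ∨ c = ((x + 1, y + 1), true) := by
      rcases hc with rfl | rfl | rfl | rfl
      · left; rfl
      · right; rfl
      · exact absurd rfl hca
      · exfalso
        obtain ⟨v, hva, hvc⟩ := hcv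
        simp [endpointsOf_true, endpointsOf_false, Prod.ext_iff] at hva hvc
        omega
    have hcross := cross_R G i hi1 hi2 (by rw [hxy]; exact hR)
    rw [hxy] at hcross
    rcases hbval with rfl | rfl <;> rcases hcval with rfl | rfl
    · -- conflict at (x+1, y)
      have h1 : ((x + 1, y) : ℤ × ℤ) ∈ endpointsOf ((x, y), true) := by
        simp [endpointsOf_true, endpointsOf_false]
      have h2 : ((x + 1, y) : ℤ × ℤ) ∈ endpointsOf ((x + 1, y), true) := by
        simp [endpointsOf_true, endpointsOf_false]
      have := matching_uniq hP (hcornmem _ (by simp)) hbP hcP h1 h2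
      simp [Prod.ext_iff] at this
    · -- parity case (south, north)
      apply parity_contradiction G i hi1 hid P hP _ _ hbP hcP
      · intro j hj1 hjd v hvS hvj
        rcases hcross j hj1 hjd v hvS hvj with rfl | rfl <;> simp [endpointsOf_true, endpointsOf_false]
      · have hTeq : SS G i ∩ (endpointsOf ((x, y), true) ∪
            endpointsOf ((x + 1, y + 1), true)) =
            {(x, y), (x + 1, y), (x + 1, y + 1)} := by
          ext v
          simp only [Set.mem_inter_iff, Set.mem_union, endpointsOf_true, endpointsOf_false,
            Set.mem_insert_iff, Set.mem_singleton_iff]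
          constructor
          · rintro ⟨hvS, hvU⟩
            have hbnd := mem_SS_bound G i hid hvS
            rw [hxy] at hbnd
            rcases hvU with (rfl | rfl) | (rfl | rfl) <;>
              first
                | (exfalso; omega)
                | simp
          · rintro (rfl | rfl | rfl) <;>
              refine ⟨tileCorners_subset_SS G i hi1 (by rw [hxy]; simp [tileCorners]), ?_⟩ <;>
              simp
        rw [hTeq]
        apply ncard_triple <;> simp [Prod.ext_iff] <;> omega
    · -- parity case (north, south)
      apply parity_contradiction G i hi1 hid P hP _ _ hbP hcP
      · intro j hj1 hjd v hvS hvj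
        rcases hcross j hj1 hjd v hvS hvj with rfl | rfl <;> simp [endpointsOf_true, endpointsOf_false]
      · have hTeq : SS G i ∩ (endpointsOf ((x, y + 1), true) ∪
            endpointsOf ((x + 1, y), true)) =
            {(x, y + 1), (x + 1, y + 1), (x + 1, y)} := by
          ext v
          simp only [Set.mem_inter_iff, Set.mem_union, endpointsOf_true, endpointsOf_false,
            Set.mem_insert_iff, Set.mem_singleton_iff]
          constructor
          · rintro ⟨hvS, hvU⟩
            have hbnd := mem_SS_bound G i hid hvS
            rw [hxy] at hbnd
            rcases hvU with (rfl | rfl) | (rfl | rfl) <;>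
              first
                | (exfalso; omega)
                | simp
          · rintro (rfl | rfl | rfl) <;>
              refine ⟨tileCorners_subset_SS G i hi1 (by rw [hxy]; simp [tileCorners]), ?_⟩ <;>
              simp
        rw [hTeq]
        apply ncard_triple <;> simp [Prod.ext_iff] <;> omega
    · -- conflict at (x+1, y+1)
      have h1 : ((x + 1, y + 1) : ℤ × ℤ) ∈ endpointsOf ((x, y + 1), true) := by
        simp [endpointsOf_true, endpointsOf_false]
      have h2 : ((x + 1, y + 1) : ℤ × ℤ) ∈ endpointsOf ((x + 1, y + 1), true) := by
        simp [endpointsOf_true, endpointsOf_false]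
      have := matching_uniq hP (hcornmem _ (by simp)) hbP hcP h1 h2
      simp [Prod.ext_iff] at this
  · -- tile i+1 is above
    rw [hxy] at hUp
    simp only [SnakeGraph.tile, tileSides, southSide, northSide, westSide, eastSide,
      Set.mem_insert_iff, Set.mem_singleton_iff, hUp] at ha2 hc
    have haval : a = ((x, y + 1), true) := by
      rcases ha1 with rfl | rfl | rfl | rfl <;> rcases ha2 with h | h | h | h <;>
        first
          | rfl
          | (exfalso; simp [Prod.ext_iff] at h <;> omega)
    subst haval
    have hbval : b = ((x, y), false) ∨ b = ((x + 1, y), false) := by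
      rcases hb with rfl | rfl | rfl | rfl
      · exfalso
        obtain ⟨v, hva, hvb⟩ := hbv
        simp [endpointsOf_true, endpointsOf_false, Prod.ext_iff] at hva hvb
        omega
      · exact absurd rfl hba
      · left; rfl
      · right; rfl
    have hcval : c = ((x, y + 1), false) ∨ c = ((x + 1, y + 1), false) := by
      rcases hc with rfl | rfl | rfl | rfl
      · exact absurd rfl hca
      · exfalso
        obtain ⟨v, hva, hvc⟩ := hcv
        simp [endpointsOf_true, endpointsOf_false, Prod.ext_iff] at hva hvc
        omega
      · left; rfl
      · right; rfl
    have hcross := cross_U G i hi1 hi2 (by rw [hxy]; exact hUp)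
    rw [hxy] at hcross
    rcases hbval with rfl | rfl <;> rcases hcval with rfl | rfl
    · -- conflict at (x, y+1)
      have h1 : ((x, y + 1) : ℤ × ℤ) ∈ endpointsOf ((x, y), false) := by
        simp [endpointsOf_true, endpointsOf_false]
      have h2 : ((x, y + 1) : ℤ × ℤ) ∈ endpointsOf ((x, y + 1), false) := by
        simp [endpointsOf_true, endpointsOf_false]
      have := matching_uniq hP (hcornmem _ (by simp)) hbP hcP h1 h2
      simp [Prod.ext_iff] at this
    · -- parity case (west, east)
      apply parity_contradiction G i hi1 hid P hP _ _ hbP hcP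
      · intro j hj1 hjd v hvS hvj
        rcases hcross j hj1 hjd v hvS hvj with rfl | rfl <;> simp [endpointsOf_true, endpointsOf_false]
      · have hTeq : SS G i ∩ (endpointsOf ((x, y), false) ∪
            endpointsOf ((x + 1, y + 1), false)) =
            {(x, y), (x, y + 1), (x + 1, y + 1)} := by
          ext v
          simp only [Set.mem_inter_iff, Set.mem_union, endpointsOf_true, endpointsOf_false,
            Set.mem_insert_iff, Set.mem_singleton_iff]
          constructor
          · rintro ⟨hvS, hvU⟩
            have hbnd := mem_SS_bound G i hid hvS
            rw [hxy] at hbnd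
            rcases hvU with (rfl | rfl) | (rfl | rfl) <;>
              first
                | (exfalso; omega)
                | simp
          · rintro (rfl | rfl | rfl) <;>
              refine ⟨tileCorners_subset_SS G i hi1 (by rw [hxy]; simp [tileCorners]), ?_⟩ <;>
              simp
        rw [hTeq]
        apply ncard_triple <;> simp [Prod.ext_iff] <;> omega
    · -- parity case (east, west)
      apply parity_contradiction G i hi1 hid P hP _ _ hbP hcP
      · intro j hj1 hjd v hvS hvj
        rcases hcross j hj1 hjd v hvS hvj with rfl | rfl <;> simp [endpointsOf_true, endpointsOf_false]
      · have hTeq : SS G i ∩ (endpointsOf ((x + 1, y), false) ∪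
            endpointsOf ((x, y + 1), false)) =
            {(x + 1, y), (x + 1, y + 1), (x, y + 1)} := by
          ext v
          simp only [Set.mem_inter_iff, Set.mem_union, endpointsOf_true, endpointsOf_false,
            Set.mem_insert_iff, Set.mem_singleton_iff]
          constructor
          · rintro ⟨hvS, hvU⟩
            have hbnd := mem_SS_bound G i hid hvS
            rw [hxy] at hbnd
            rcases hvU with (rfl | rfl) | (rfl | rfl) <;>
              first
                | (exfalso; omega)
                | simp
          · rintro (rfl | rfl | rfl) <;>
              refine ⟨tileCorners_subset_SS G i hi1 (by rw [hxy]; simp [tileCorners]), ?_⟩ <;>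
              simp
        rw [hTeq]
        apply ncard_triple <;> simp [Prod.ext_iff] <;> omega
    · -- conflict at (x+1, y+1)
      have h1 : ((x + 1, y + 1) : ℤ × ℤ) ∈ endpointsOf ((x + 1, y), false) := by
        simp [endpointsOf_true, endpointsOf_false]
      have h2 : ((x + 1, y + 1) : ℤ × ℤ) ∈ endpointsOf ((x + 1, y + 1), false) := by
        simp [endpointsOf_true, endpointsOf_false]
      have := matching_uniq hP (hcornmem _ (by simp)) hbP hcP h1 h2
      simp [Prod.ext_iff] at this
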